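/- Let G be a paw-free graph with maximum degree at most k−1, C a clique in G with |C| ≥ 2, and S an independent set disjoint from C. Then the number of vertices of S having at least one neighbor in C is at most 2(k−1). -/
import Mathlib


/-- The paw: a triangle `0,1,2` with a pendant vertex `3` adjacent to `0`. -/
def Paw : SimpleGraph (Fin 4) :=
  SimpleGraph.fromRel (fun a b =>
    (a, b) ∈ [((0 : Fin 4), (1 : Fin 4)), (0, 2), (1, 2), (0, 3)])

lemma paw_embed {V : Type*} (G : SimpleGraph V) {c a b v : V}
    (hca : G.Adj c a) (hcb : G.Adj c b) (hab : G.Adj a b) (hcv : G.Adj c v)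
    (hav : ¬ G.Adj a v) (hbv : ¬ G.Adj b v) : Nonempty (Paw ↪g G) := by
  have hca' := hca.ne
  have hcb' := hcb.ne
  have hab' := hab.ne
  have hcv' := hcv.ne
  have hav' : a ≠ v := fun h => hbv (h ▸ hab.symm)
  have hbv' : b ≠ v := fun h => hav (h ▸ hab)
  refine ⟨⟨⟨![c,a,b,v], ?_⟩, ?_⟩⟩
  · intro i j h
    fin_cases i <;> fin_cases j <;>
      simp_all [Matrix.cons_val_zero, Matrix.cons_val_one] <;>
      first
      | rfl
      | (exfalso; first
          | exact hca' h | exact hca' h.symm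
          | exact hcb' h | exact hcb' h.symm
          | exact hab' h | exact hab' h.symm
          | exact hcv' h | exact hcv' h.symm
          | exact hav' h | exact hav' h.symm
          | exact hbv' h | exact hbv' h.symm)
  · intro i j
    have hac := hca.symm
    have hbc := hcb.symm
    have hba := hab.symm
    have hvc := hcv.symm
    have hva : ¬ G.Adj v a := fun h => hav h.symm
    have hvb : ¬ G.Adj v b := fun h => hbv h.symm
    fin_cases i <;> fin_cases j <;>
      simp_all [Paw, SimpleGraph.fromRel_adj, G.irrefl] <;> tauto

/-- In a paw-free graph of maximum degree at most `k-1`, at most `2(k-1)`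
vertices of an independent set `S` disjoint from a clique `C` of size at least
`2` have a neighbor in `C`. -/
theorem paw_free_clique_nbhd_bound {V : Type*} [Fintype V] [DecidableEq V]
    (G : SimpleGraph V) [DecidableRel G.Adj]
    (hpf : IsEmpty (Paw ↪g G))
    (k : ℕ) (hΔ : ∀ v : V, G.degree v ≤ k - 1)
    (C S : Finset V)
    (hC : ∀ a ∈ C, ∀ b ∈ C, a ≠ b → G.Adj a b)
    (hC2 : 2 ≤ C.card)
    (hS : ∀ a ∈ S, ∀ b ∈ S, ¬ G.Adj a b)
    (hdisj : Disjoint C S) :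
    (S.filter (fun v => ∃ c ∈ C, G.Adj v c)).card ≤ 2 * (k - 1) := by
  set N := S.filter (fun v => ∃ c ∈ C, G.Adj v c) with hN
  -- each v in N is adjacent to all but at most one vertex of C
  have key : ∀ v ∈ N, C.card - 1 ≤ (C.filter (fun c => G.Adj v c)).card := by
    intro v hv
    rw [hN, Finset.mem_filter] at hv
    obtain ⟨c, hcC, hvc⟩ := hv.2
    have hnon : (C.filter (fun c => ¬ G.Adj v c)).card ≤ 1 := by
      by_contra h
      push_neg at h
      obtain ⟨a, ha, b, hb, hab⟩ := Finset.one_lt_card.mp h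
      rw [Finset.mem_filter] at ha hb
      have hac : a ≠ c := fun h => ha.2 (h.symm ▸ hvc)
      have hbc : b ≠ c := fun h => hb.2 (h.symm ▸ hvc)
      exact hpf.false (paw_embed G (hC c hcC a ha.1 hac.symm) (hC c hcC b hb.1 hbc.symm)
        (hC a ha.1 b hb.1 hab) hvc.symm (fun h => ha.2 h.symm) (fun h => hb.2 h.symm)).some
    have := Finset.card_filter_add_card_filter_not
      (s := C) (p := fun c => G.Adj v c)
    omega
  -- double counting
  have h1 : N.card * (C.card - 1) ≤ ∑ v ∈ N, (C.filter (fun c => G.Adj v c)).card := by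
    calc N.card * (C.card - 1) = ∑ _v ∈ N, (C.card - 1) := by
          rw [Finset.sum_const, smul_eq_mul]
      _ ≤ _ := Finset.sum_le_sum key
  have h2 : ∑ v ∈ N, (C.filter (fun c => G.Adj v c)).card
      = ∑ c ∈ C, (N.filter (fun v => G.Adj v c)).card := by
    simp only [Finset.card_filter]
    exact Finset.sum_comm' (by intro x y; tauto)
  have h3 : ∑ c ∈ C, (N.filter (fun v => G.Adj v c)).card ≤ C.card * (k - 1) := by
    calc ∑ c ∈ C, (N.filter (fun v => G.Adj v c)).card
        ≤ ∑ c ∈ C, (k - 1) := by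
          refine Finset.sum_le_sum fun c _ => le_trans ?_ (hΔ c)
          rw [← SimpleGraph.card_neighborFinset_eq_degree]
          exact Finset.card_le_card fun v hv => by
            rw [Finset.mem_filter] at hv
            exact (SimpleGraph.mem_neighborFinset G c v).mpr hv.2.symm
      _ = C.card * (k - 1) := by rw [Finset.sum_const, smul_eq_mul]
  have hCle : C.card ≤ 2 * (C.card - 1) := by omega
  have : N.card * (C.card - 1) ≤ 2 * (k - 1) * (C.card - 1) := by
    calc N.card * (C.card - 1) ≤ C.card * (k - 1) := by omega
      _ ≤ 2 * (C.card - 1) * (k - 1) := Nat.mul_le_mul_right _ hCle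
      _ = 2 * (k - 1) * (C.card - 1) := by ring
  exact Nat.le_of_mul_le_mul_right this (by omega)
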